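/- Let V be a finite-dimensional real inner product space, ω a linear isometry of V with ω^N = id_V (N ≥ 1), and Γ a lattice in V with ω(Γ) = Γ. Let V_ω = {v ∈ V : ω(v) = v} and P_ω = (1/N)(id + ω + ⋯ + ω^{N−1}). Then the image P_ω(Γ) equals the set {x ∈ V_ω : (x, β) ∈ ℤ for all β ∈ Γ^∨ with ω(β) = β}; in other words, P_ω restricts to a surjective map from Γ onto the lattice in V_ω dual to the fixed sublattice (Γ^∨)_ω = Γ^∨ ∩ V_ω. -/

import Mathlib

open scoped RealInnerProductSpace
open Complex

/-- Let `V` be a finite-dimensional real inner product space, `ω` a linear isometry of `V`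
with `ω^N = id` (`N ≥ 1`), and `Γ` a lattice in `V` (the `ℤ`-span of an `ℝ`-basis `b`)
with `ω(Γ) = Γ`.  Then the image of `Γ` under the orthogonal projection
`P = (1/N)(id + ω + ⋯ + ω^{N−1})` onto the fixed subspace `V_ω` equals the set of
`ω`-fixed vectors `x` such that `(x, β) ∈ ℤ` for every `ω`-fixed `β ∈ Γ^∨`; i.e. `P`
restricts to a surjection from `Γ` onto the lattice in `V_ω` dual to the fixed sublattice
`(Γ^∨)_ω = Γ^∨ ∩ V_ω`. -/
theorem image_of_lattice_under_averaging
    {V : Type*} [NormedAddCommGroup V] [InnerProductSpace ℝ V] [FiniteDimensional ℝ V]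
    {ι : Type*} [Fintype ι] (b : Module.Basis ι ℝ V)
    (Γ : Submodule ℤ V) (hΓ : Γ = Submodule.span ℤ (Set.range b))
    (ω : V ≃ₗᵢ[ℝ] V) (N : ℕ) (hN : 1 ≤ N) (hord : ω ^ N = 1)
    (hinv : ∀ v : V, v ∈ Γ ↔ ω v ∈ Γ) :
    (fun v : V => (N : ℝ)⁻¹ • ∑ i ∈ Finset.range N, (ω ^ i) v) '' (Γ : Set V) =
      {x : V | ω x = x ∧ ∀ β : V, ω β = β →
        (∀ y ∈ Γ, ∃ n : ℤ, ⟪β, y⟫ = (n : ℝ)) → ∃ n : ℤ, ⟪x, β⟫ = (n : ℝ)} := by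
  classical
  have hNR : (N : ℝ) ≠ 0 := Nat.cast_ne_zero.mpr (by omega)
  set P : V → V := fun v => (N : ℝ)⁻¹ • ∑ i ∈ Finset.range N, (ω ^ i) v with hPdef
  have hmul : ∀ (f g : V ≃ₗᵢ[ℝ] V) (v : V), (f * g) v = f (g v) := fun _ _ _ => rfl
  have hpowfix : ∀ (β : V), ω β = β → ∀ i, (ω ^ i) β = β := by
    intro β hβ i
    induction i with
    | zero => rfl
    | succ n ih => rw [pow_succ', hmul, ih]; exact hβ
  -- fixed vectors are fixed by P
  have hfixP : ∀ v, ω v = v → P v = v := by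
    intro v hv
    have : ∀ i ∈ Finset.range N, (ω ^ i) v = v := fun i _ => hpowfix v hv i
    rw [hPdef]
    simp only [Finset.sum_congr rfl this, Finset.sum_const, Finset.card_range]
    rw [← Nat.cast_smul_eq_nsmul ℝ, smul_smul, inv_mul_cancel₀ hNR, one_smul]
  -- P v is fixed by ω
  have hPfixed : ∀ v, ω (P v) = P v := by
    intro v
    have h1 : ω (P v) = (N : ℝ)⁻¹ • ∑ i ∈ Finset.range N, (ω ^ (i + 1)) v := by
      rw [hPdef]
      simp only [map_smul, map_sum]
      congr 1
      refine Finset.sum_congr rfl fun i _ => ?_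
      rw [pow_succ', hmul]
    have h2 : ∑ i ∈ Finset.range N, (ω ^ (i + 1)) v = ∑ i ∈ Finset.range N, (ω ^ i) v := by
      have e1 : ∑ i ∈ Finset.range (N + 1), (ω ^ i) v
          = (∑ i ∈ Finset.range N, (ω ^ (i + 1)) v) + (ω ^ 0) v := Finset.sum_range_succ' _ _
      have e2 : ∑ i ∈ Finset.range (N + 1), (ω ^ i) v
          = (∑ i ∈ Finset.range N, (ω ^ i) v) + (ω ^ N) v := Finset.sum_range_succ _ _
      have e3 : (ω ^ N) v = (ω ^ 0) v := by rw [hord]; rfl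
      have := e1.symm.trans e2
      rw [e3] at this
      exact add_right_cancel this
    rw [h1, h2]
  -- inner products with fixed vectors
  have hinner : ∀ β, ω β = β → ∀ v, ⟪β, P v⟫ = ⟪β, v⟫ := by
    intro β hβ v
    rw [hPdef]
    simp only [inner_smul_right, inner_sum]
    have : ∀ i ∈ Finset.range N, ⟪β, (ω ^ i) v⟫ = ⟪β, v⟫ := by
      intro i _
      conv_lhs => rw [show β = (ω ^ i) β from (hpowfix β hβ i).symm]
      exact (ω ^ i).inner_map_map β v
    rw [Finset.sum_congr rfl this, Finset.sum_const, Finset.card_range, nsmul_eq_mul,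
      ← mul_assoc, inv_mul_cancel₀ hNR, one_mul]
  have hΓpow : ∀ v ∈ Γ, ∀ i, (ω ^ i) v ∈ Γ := by
    intro v hv i
    induction i with
    | zero => exact hv
    | succ n ih => rw [pow_succ', hmul]; exact (hinv _).mp ih
  ext x
  constructor
  · rintro ⟨v, hv, rfl⟩
    refine ⟨hPfixed v, fun β hβ hβint => ?_⟩
    obtain ⟨n, hn⟩ := hβint v hv
    exact ⟨n, by rw [real_inner_comm, hinner β hβ v, hn]⟩
  · rintro ⟨hx, hxint⟩
    -- the fixed subspace
    set W : Submodule ℝ V := LinearMap.ker ((ω.toLinearEquiv : V →ₗ[ℝ] V) - LinearMap.id)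
      with hWdef
    have hmemW : ∀ v : V, v ∈ W ↔ ω v = v := by
      intro v
      simp [hWdef, LinearMap.mem_ker, LinearMap.sub_apply, sub_eq_zero]
    -- the averaging operator as a linear map
    set Q : V →ₗ[ℝ] V := (N : ℝ)⁻¹ • ∑ i ∈ Finset.range N,
      ((ω ^ i).toLinearEquiv : V →ₗ[ℝ] V) with hQdef
    have hQ : ∀ v, Q v = P v := by
      intro v
      simp [hQdef, hPdef, LinearMap.sum_apply]
    have hQW : ∀ v, Q v ∈ W := fun v => (hmemW _).mpr (by rw [hQ]; exact hPfixed v)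
    set R : V →ₗ[ℝ] ↥W := Q.codRestrict W hQW with hRdef
    set Qc : V →ₗ[ℤ] ↥W := R.restrictScalars ℤ with hQcdef
    set Λ : Submodule ℤ ↥W := Submodule.map Qc Γ with hΛdef
    -- discreteness of Λ
    have hu : ∀ i : ι, IsUnit ((fun _ : ι => (N : ℝ)⁻¹) i) :=
      fun _ => isUnit_iff_ne_zero.mpr (inv_ne_zero hNR)
    set b' : Module.Basis ι ℝ V := b.isUnitSMul hu with hb'def
    set S : Submodule ℤ V := Submodule.span ℤ (Set.range ⇑b') with hSdef
    have hQS : ∀ v ∈ Γ, Q v ∈ S := by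
      intro v hv
      set L : V →ₗ[ℤ] V := (((N : ℝ)⁻¹ • LinearMap.id : V →ₗ[ℝ] V)).restrictScalars ℤ with hLdef
      have hg : ∑ i ∈ Finset.range N, (ω ^ i) v ∈ Γ :=
        Submodule.sum_mem _ (fun i _ => hΓpow v hv i)
      have h1 : Q v = L (∑ i ∈ Finset.range N, (ω ^ i) v) := by
        rw [hQ]; rfl
      have h2 : Submodule.map L Γ ≤ S := by
        rw [hΓ, Submodule.map_span, hSdef]
        apply Submodule.span_mono
        rintro _ ⟨_, ⟨i, rfl⟩, rfl⟩
        refine ⟨i, ?_⟩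
        rw [Module.Basis.isUnitSMul_apply]
        rfl
      exact h1 ▸ h2 (Submodule.mem_map_of_mem hg)
    haveI hSdisc : DiscreteTopology ↥(S : Set V) := by
      have : DiscreteTopology ↥S := by rw [hSdef]; infer_instance
      exact this
    haveI hdisc : DiscreteTopology ↥Λ := by
      have hemb : Topology.IsEmbedding (fun z : ↥Λ => ((z : ↥W) : V)) :=
        Topology.IsEmbedding.subtypeVal.comp Topology.IsEmbedding.subtypeVal
      have hmem : ∀ z : ↥Λ, ((z : ↥W) : V) ∈ (S : Set V) := by
        rintro ⟨z, hz⟩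
        obtain ⟨v, hv, rfl⟩ := hz
        exact hQS v hv
      exact (hemb.codRestrict (S : Set V) hmem).discreteTopology
    -- Λ spans the fixed subspace
    haveI hzl : IsZLattice ℝ Λ := by
      constructor
      have h1 : Submodule.span ℝ ((Γ : Set V)) = ⊤ := by
        rw [hΓ]; exact ZSpan.span_top b
      have h2 : (Λ : Set ↥W) = ⇑R '' (Γ : Set V) := by
        rw [hΛdef, Submodule.map_coe]; rfl
      rw [h2, Submodule.span_image, h1, Submodule.map_top, LinearMap.range_eq_top]
      intro w
      refine ⟨(w : V), Subtype.ext ?_⟩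
      show Q (w : V) = (w : V)
      rw [hQ]; exact hfixP _ ((hmemW _).mp w.2)
    -- a ℤ-basis of Λ which is an ℝ-basis of W
    let bz := Module.Free.chooseBasis ℤ ↥Λ
    let bW : Module.Basis _ ℝ ↥W := Module.Basis.ofZLatticeBasis ℝ Λ bz
    have hspanbW : Submodule.span ℤ (Set.range ⇑bW) = Λ :=
      Module.Basis.ofZLatticeBasis_span ℝ Λ bz
    -- the inner product as bilinear form on W
    set B : LinearMap.BilinForm ℝ ↥W := innerₗ ↥W with hBdef
    have hBapp : ∀ u v : ↥W, B u v = ⟪(u : V), (v : V)⟫ := by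
      intro u v
      rw [hBdef, innerₗ_apply_apply, Submodule.coe_inner]
    have hBnd : B.Nondegenerate := by
      refine ⟨fun u hu => ?_, fun u hu => ?_⟩
      all_goals
        have h := hu u
        rw [hBapp] at h
        exact Subtype.ext (inner_self_eq_zero.mp h)
    have hBsymm : B.IsSymm := by
      refine ⟨fun u v => ?_⟩
      rw [hBapp, hBapp, real_inner_comm]
    have hxW : x ∈ W := (hmemW x).mpr hx
    -- biduality
    have hdd := B.dualSubmodule_dualSubmodule_of_basis (R := ℤ) hBnd hBsymm bW
    rw [hspanbW] at hdd
    have hxmem : (⟨x, hxW⟩ : ↥W) ∈ B.dualSubmodule (B.dualSubmodule Λ) := by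
      intro β' hβ'
      have hβfix : ω (β' : V) = (β' : V) := (hmemW _).mp β'.2
      have hβint : ∀ y ∈ Γ, ∃ n : ℤ, ⟪(β' : V), y⟫ = (n : ℝ) := by
        intro y hy
        have h1 : Qc y ∈ Λ := Submodule.mem_map_of_mem hy
        obtain ⟨n, hn⟩ := Submodule.mem_one.mp (hβ' (Qc y) h1)
        refine ⟨n, ?_⟩
        rw [← hinner _ hβfix y, ← hQ]
        have h2 : B β' (Qc y) = ⟪(β' : V), Q y⟫ := hBapp _ _
        rw [← h2, ← hn]
        simp
      obtain ⟨n, hn⟩ := hxint (β' : V) hβfix hβint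
      refine Submodule.mem_one.mpr ⟨n, ?_⟩
      rw [hBapp]
      simpa [eq_intCast] using hn.symm
    rw [hdd] at hxmem
    obtain ⟨γ, hγ, hγx⟩ := hxmem
    refine ⟨γ, hγ, ?_⟩
    have h3 : Q γ = x := congrArg Subtype.val hγx
    rw [← hQ]
    exact h3
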